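/- Let Q̂ > 0, λ > 0 and h ∈ ℂ. The function x ↦ (Q̂/2)|x|² − Re(h̄ · x) + λ|x| on ℂ attains its global minimum at a unique point x̂, given by: x̂ = 0 if |h| ≤ λ, and x̂ = (h/|h|) · (|h| − λ)/Q̂ if |h| > λ (the complex soft-thresholding of h). -/

import Mathlib

/-- The objective `x ↦ (Q̂/2)|x|² − Re(h̄·x) + λ|x|` on `ℂ`. -/
noncomputable def softThreshObj (Qh lam : ℝ) (h : ℂ) (x : ℂ) : ℝ :=
  Qh / 2 * ‖x‖ ^ 2 - ((starRingEnd ℂ) h * x).re + lam * ‖x‖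

/-- The complex soft-thresholding of `h`: `0` if `|h| ≤ λ`, else `(h/|h|)·(|h| − λ)/Q̂`. -/
noncomputable def softThresh (Qh lam : ℝ) (h : ℂ) : ℂ :=
  if ‖h‖ ≤ lam then 0 else (h / (‖h‖ : ℂ)) * (((‖h‖ - lam) / Qh : ℝ) : ℂ)

private lemma re_le_norm_mul (h x : ℂ) : ((starRingEnd ℂ) h * x).re ≤ ‖h‖ * ‖x‖ := by
  calc ((starRingEnd ℂ) h * x).re ≤ ‖(starRingEnd ℂ) h * x‖ := Complex.re_le_norm _
    _ = ‖h‖ * ‖x‖ := by rw [norm_mul, RCLike.norm_conj]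

private lemma objLB (Qh lam : ℝ) (h x : ℂ) :
    Qh / 2 * ‖x‖ ^ 2 - ‖h‖ * ‖x‖ + lam * ‖x‖ ≤ softThreshObj Qh lam h x := by
  have := re_le_norm_mul h x
  unfold softThreshObj; linarith

private lemma re_eq_norm_real (z : ℂ) (hz : z.re = ‖z‖) : z = (z.re : ℂ) := by
  have h1 : ‖z‖ ^ 2 = z.re * z.re + z.im * z.im := by
    rw [Complex.sq_norm, Complex.normSq_apply]
  have h2 : z.re ^ 2 = ‖z‖ ^ 2 := by rw [hz]
  have him : z.im = 0 := by nlinarith [mul_self_nonneg z.im]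
  exact Complex.ext (by simp) (by simp [him])

/-- for `Q̂ > 0`, `λ > 0` and `h ∈ ℂ`, the function
`x ↦ (Q̂/2)|x|² − Re(h̄·x) + λ|x|` attains its global minimum at the unique point given by
the complex soft-thresholding of `h`. -/
theorem softThreshObj_unique_min (Qh lam : ℝ) (hQ : 0 < Qh) (hlam : 0 < lam) (h : ℂ) :
    (∀ x : ℂ, softThreshObj Qh lam h (softThresh Qh lam h) ≤ softThreshObj Qh lam h x) ∧
      ∀ xh : ℂ, (∀ x : ℂ, softThreshObj Qh lam h xh ≤ softThreshObj Qh lam h x) →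
        xh = softThresh Qh lam h := by
  by_cases hc : ‖h‖ ≤ lam
  · -- soft threshold is 0
    have hst : softThresh Qh lam h = 0 := by unfold softThresh; rw [if_pos hc]
    have hf0 : softThreshObj Qh lam h 0 = 0 := by simp [softThreshObj]
    have hmin : ∀ x : ℂ, softThreshObj Qh lam h 0 ≤ softThreshObj Qh lam h x := by
      intro x
      have h1 := objLB Qh lam h x
      have h2 : 0 ≤ ‖x‖ := norm_nonneg x
      have h4 := mul_le_mul_of_nonneg_right hc h2
      rw [hf0]; nlinarith [sq_nonneg ‖x‖]
    constructor
    · rw [hst]; exact hmin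
    · intro xh hxh
      have h1 := hxh 0
      rw [hf0] at h1
      have h2 := objLB Qh lam h xh
      have h3 : 0 ≤ ‖xh‖ := norm_nonneg xh
      have h4 := mul_le_mul_of_nonneg_right hc h3
      have h5 : Qh / 2 * ‖xh‖ ^ 2 ≤ Qh / 2 * 0 := by linarith
      have h6 : ‖xh‖ ^ 2 ≤ 0 := le_of_mul_le_mul_left h5 (half_pos hQ)
      have h7 : ‖xh‖ ^ 2 = 0 := le_antisymm h6 (sq_nonneg _)
      have h8 : ‖xh‖ = 0 := by
        have := pow_eq_zero_iff (n := 2) (by norm_num) |>.mp h7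
        exact this
      rw [hst]; exact norm_eq_zero.mp h8
  · push_neg at hc
    have ha : 0 < ‖h‖ := lt_trans hlam hc
    have hne : h ≠ 0 := by simpa using ha.ne'
    have hane : (‖h‖ : ℂ) ≠ 0 := by exact_mod_cast ha.ne'
    set a := ‖h‖ with hadef
    set r : ℝ := (a - lam) / Qh with hrdef
    have hr : 0 < r := div_pos (by linarith) hQ
    have har : a - lam = Qh * r := by rw [hrdef]; field_simp
    have hst : softThresh Qh lam h = (h / (a : ℂ)) * (r : ℂ) := by
      unfold softThresh; rw [if_neg (not_le.mpr hc)]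
    -- norm of the soft threshold
    have hnst : ‖softThresh Qh lam h‖ = r := by
      rw [hst, norm_mul, norm_div, Complex.norm_real, Complex.norm_real]
      rw [Real.norm_of_nonneg ha.le, Real.norm_of_nonneg hr.le, ← hadef]
      rw [div_self ha.ne', one_mul]
    have hmul : (starRingEnd ℂ) h * h = ((a : ℂ)) ^ 2 := by
      rw [Complex.conj_mul']
    -- value at the soft threshold
    have hre : ((starRingEnd ℂ) h * softThresh Qh lam h).re = a * r := by
      have key : (starRingEnd ℂ) h * softThresh Qh lam h = ((a * r : ℝ) : ℂ) := by
        rw [hst, show (starRingEnd ℂ) h * (h / (a : ℂ) * (r : ℂ))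
            = ((starRingEnd ℂ) h * h) * (r : ℂ) / (a : ℂ) by ring, hmul]
        push_cast
        field_simp
      rw [key, Complex.ofReal_re]
    have hrr : (a - lam) * r = Qh * r * r := by rw [har]
    have hfst : softThreshObj Qh lam h (softThresh Qh lam h) = -(Qh / 2) * r ^ 2 := by
      unfold softThreshObj
      rw [hnst, hre]; nlinarith [hrr]
    constructor
    · intro x
      have h1 := objLB Qh lam h x
      have h2 : 0 ≤ ‖x‖ := norm_nonneg x
      have hax : (a - lam) * ‖x‖ = Qh * r * ‖x‖ := by rw [har]
      rw [hfst]
      nlinarith [mul_nonneg hQ.le (sq_nonneg (‖x‖ - r)), hax]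
    · intro xh hxh
      have h1 := hxh (softThresh Qh lam h)
      rw [hfst] at h1
      have h2 := objLB Qh lam h xh
      have h3 : 0 ≤ ‖xh‖ := norm_nonneg xh
      have hax : (a - lam) * ‖xh‖ = Qh * r * ‖xh‖ := by rw [har]
      have hsq : Qh / 2 * (‖xh‖ - r) ^ 2 ≤ Qh / 2 * 0 := by nlinarith [hax]
      have hsq2 : (‖xh‖ - r) ^ 2 ≤ 0 := le_of_mul_le_mul_left hsq (half_pos hQ)
      have hsq3 : (‖xh‖ - r) ^ 2 = 0 := le_antisymm hsq2 (sq_nonneg _)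
      have hrx : ‖xh‖ = r := by
        have := pow_eq_zero_iff (n := 2) (by norm_num) |>.mp hsq3
        linarith [sub_eq_zero.mp this]
      have hrex : ((starRingEnd ℂ) h * xh).re = a * r := by
        have hle := re_le_norm_mul h xh
        rw [← hadef, hrx] at hle
        unfold softThreshObj at h1
        rw [hrx] at h1
        nlinarith [hrr]
      -- equality in |Re z| ≤ |z|
      have hnz : ‖(starRingEnd ℂ) h * xh‖ = a * r := by
        rw [norm_mul, RCLike.norm_conj, ← hadef, hrx]
      have heq : (starRingEnd ℂ) h * xh = ((a * r : ℝ) : ℂ) := by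
        have := re_eq_norm_real ((starRingEnd ℂ) h * xh) (by rw [hrex, hnz])
        rw [hrex] at this; exact this
      -- solve for xh
      have hmul2 : ((a : ℂ)) ^ 2 * xh = h * ((a * r : ℝ) : ℂ) := by
        rw [← heq, ← hmul]; ring
      rw [hst]
      refine mul_left_cancel₀ (pow_ne_zero 2 hane) ?_
      rw [hmul2]
      push_cast
      field_simp
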